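/- Fisher identity (discrete case): For a joint probability mass function p on a finite type X × Y depending smoothly on a real parameter t, with p(x,t) := ∑_y p(x,y,t) > 0 for all x, the derivative of log p(x,t) with respect to t equals the conditional expectation over y ~ p(y|x,t) of the derivative of log p(x|y,t) with respect to t, where p(y,t) := ∑_x p(x,y,t) is assumed independent of t. -/

import Mathlib

/-- Fisher identity (discrete case). -/
theorem fisher_identity_discrete
    {X Y : Type*} [Fintype X] [Fintype Y]
    (p : X → Y → ℝ → ℝ)
    (hpos : ∀ x y t, 0 < p x y t)
    (hsum : ∀ t, ∑ x, ∑ y, p x y t = 1)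
    (hdiff : ∀ x y, Differentiable ℝ (p x y))
    (hmarg : ∀ y t, deriv (fun s => ∑ x, p x y s) t = 0)
    (x : X) (t : ℝ) :
    deriv (fun s => Real.log (∑ y, p x y s)) t =
      ∑ y, (p x y t / ∑ y', p x y' t) *
        deriv (fun s => Real.log (p x y s / ∑ x', p x' y s)) t := by
  have hneY : Nonempty Y := by
    by_contra h
    have : (∑ x, ∑ y, p x y t) = 0 := by
      simp [Finset.univ_eq_empty_iff.mpr (not_nonempty_iff.mp h)]
    rw [hsum t] at this; norm_num at this
  have hneX : Nonempty X := ⟨x⟩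
  have hS : ∀ s, 0 < ∑ y, p x y s := fun s =>
    Finset.sum_pos (fun y _ => hpos x y s) Finset.univ_nonempty
  have hSy : ∀ y s, 0 < ∑ x', p x' y s := fun y s =>
    Finset.sum_pos (fun x' _ => hpos x' y s) Finset.univ_nonempty
  have hdS : HasDerivAt (fun s => ∑ y, p x y s) (∑ y, deriv (p x y) t) t :=
    HasDerivAt.fun_sum (fun y _ => ((hdiff x y) t).hasDerivAt)
  have hdSy : ∀ y, HasDerivAt (fun s => ∑ x', p x' y s) 0 t := by
    intro y
    have h : HasDerivAt (fun s => ∑ x', p x' y s) (∑ x', deriv (p x' y) t) t :=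
      HasDerivAt.fun_sum (fun x' _ => ((hdiff x' y) t).hasDerivAt)
    have h2 := h.deriv
    rw [hmarg y t] at h2
    rwa [← h2] at h
  have hLHS : deriv (fun s => Real.log (∑ y, p x y s)) t
      = (∑ y, deriv (p x y) t) / (∑ y, p x y t) :=
    (hdS.log (hS t).ne').deriv
  have hRHS : ∀ y, deriv (fun s => Real.log (p x y s / ∑ x', p x' y s)) t
      = deriv (p x y) t / p x y t := by
    intro y
    have hq : HasDerivAt (fun s => p x y s / ∑ x', p x' y s)
        ((deriv (p x y) t * (∑ x', p x' y t) - p x y t * 0) / (∑ x', p x' y t) ^ 2) t :=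
      ((hdiff x y) t).hasDerivAt.div (hdSy y) (hSy y t).ne'
    have hqne : p x y t / ∑ x', p x' y t ≠ 0 :=
      (div_pos (hpos x y t) (hSy y t)).ne'
    rw [(hq.log hqne).deriv]
    have h1 := (hpos x y t).ne'
    have h2 := (hSy y t).ne'
    field_simp
    ring
  rw [hLHS]
  simp only [hRHS]
  rw [Finset.sum_div]
  refine Finset.sum_congr rfl fun y _ => ?_
  have h1 := (hpos x y t).ne'
  have h2 := (hS t).ne'
  field_simp
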